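/- The inclusion of the category of analytic endofunctors of Set into finitary endofunctors of Set has a right adjoint, the 'analytic part' functor (-)^a, given by F^a(X) = Σ_{n∈ℕ} X^n ⊗_{S_n} F((n]), with counit at F sending the class of (x⃗, t) ∈ X^n ⊗_{S_n} F((n]) to F(x⃗)(t). -/

import Mathlib

open CategoryTheory

/-- Elements `(x⃗, a)` of `∑ₙ Xⁿ × Aₙ`. -/
def AnElem (A : ℕ → Type) (X : Type) : Type := Σ n : ℕ, (Fin n → X) × A n

/-- The tensor relation `(x⃗ ∘ σ, a) ∼ (x⃗, σ · a)` for a family of `Sₙ`-sets. -/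
def AnRel (A : ℕ → Type) (act : ∀ n : ℕ, Equiv.Perm (Fin n) → A n → A n) (X : Type) :
    AnElem A X → AnElem A X → Prop := fun a b =>
  ∃ (n : ℕ) (x : Fin n → X) (σ : Equiv.Perm (Fin n)) (g : A n),
    a = ⟨n, x ∘ ⇑σ, g⟩ ∧ b = ⟨n, x, act n σ g⟩

/-- The analytic endofunctor `X ↦ ∑ₙ Xⁿ ⊗_{Sₙ} Aₙ` of a family of `Sₙ`-sets. -/
def anRealize (A : ℕ → Type) (act : ∀ n : ℕ, Equiv.Perm (Fin n) → A n → A n) :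
    Type ⥤ Type where
  obj X := Quot (AnRel A act X)
  map {X Y} h := TypeCat.ofHom (Quot.lift
    (fun a => Quot.mk (AnRel A act Y) ⟨a.1, h ∘ a.2.1, a.2.2⟩)
    (by rintro a b ⟨n, x, σ, g, rfl, rfl⟩
        exact Quot.sound ⟨n, h ∘ x, σ, g, rfl, rfl⟩))
  map_id X := by
    ext t
    induction t using Quot.ind
    rfl
  map_comp f g := by
    ext t
    induction t using Quot.ind
    rfl

/-- A functor is analytic if it is isomorphic to the realization of a family of
`Sₙ`-sets. -/
def IsAnalyticFunctor (G : Type ⥤ Type) : Prop :=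
  ∃ (A : ℕ → Type) (act : ∀ n : ℕ, Equiv.Perm (Fin n) → A n → A n),
    Nonempty (G ≅ anRealize A act)

/-- A natural transformation is weakly cartesian if all its naturality squares are
weak pullbacks. -/
def WeaklyCartesian {F G : Type ⥤ Type} (θ : F ⟶ G) : Prop :=
  ∀ (X Y : Type) (f : X → Y) (a : F.obj Y) (b : G.obj X),
    G.map (TypeCat.ofHom f) b = θ.app Y a → ∃ a' : F.obj X, F.map (TypeCat.ofHom f) a' = a ∧ θ.app X a' = b

/-- The analytic part `Fᵃ(X) = ∑ₙ Xⁿ ⊗_{Sₙ} F((n])` of an endofunctor of `Set`. -/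
def analyticPart (F : Type ⥤ Type) : Type ⥤ Type :=
  anRealize (fun n => F.obj (Fin n)) (fun _ σ t => F.map (TypeCat.ofHom ⇑σ) t)

/-- The component at `X` of the counit `εF : Fᵃ ⟶ F`, `[(x⃗, t)] ↦ F(x⃗)(t)`. -/
def anCounitApp (F : Type ⥤ Type) (X : Type) :
    Quot (AnRel (fun n => F.obj (Fin n)) (fun _ σ t => F.map (TypeCat.ofHom ⇑σ) t) X) →
      F.obj X :=
  Quot.lift (fun a => F.map (TypeCat.ofHom a.2.1) a.2.2)
    (by rintro a b ⟨n, x, σ, g, rfl, rfl⟩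
        exact congrArg (fun φ => φ g) (F.map_comp (TypeCat.ofHom ⇑σ) (TypeCat.ofHom x)))

/-- The counit `εF : Fᵃ ⟶ F`, `[(x⃗, t)] ↦ F(x⃗)(t)`. -/
def anCounit (F : Type ⥤ Type) : analyticPart F ⟶ F where
  app X := TypeCat.ofHom (anCounitApp F X)
  naturality X Y f := by
    ext t
    induction t using Quot.ind with
    | _ a => exact congrArg (fun φ => φ a.2.2) (F.map_comp (TypeCat.ofHom a.2.1) f)


namespace AnAux

def SRel (A : ℕ → Type) (X : Type) : AnElem A X → AnElem A X → Prop := fun a b =>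
  ∃ (n : ℕ) (x : Fin n → X) (σ : Equiv.Perm (Fin n)) (g g' : A n),
    a = ⟨n, x ∘ ⇑σ, g⟩ ∧ b = ⟨n, x, g'⟩

lemma sRel_equiv (A : ℕ → Type) (X : Type) : Equivalence (SRel A X) := by
  constructor
  · rintro ⟨n, x, g⟩
    exact ⟨n, x, 1, g, g, rfl, rfl⟩
  · rintro a b ⟨n, x, σ, g, g', rfl, rfl⟩
    refine ⟨n, x ∘ ⇑σ, σ⁻¹, g', g, ?_, rfl⟩
    have hx : (x ∘ ⇑σ) ∘ ⇑σ⁻¹ = x := by funext i; simp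
    rw [hx]
  · rintro a b c ⟨n, x, σ, g, g', rfl, h1⟩ ⟨m, y, τ, h, h', h2, rfl⟩
    rw [h1] at h2
    obtain ⟨rfl, h3⟩ := Sigma.mk.inj_iff.mp h2
    obtain ⟨h4, -⟩ := Prod.mk_inj.mp (eq_of_heq h3)
    subst h4
    refine ⟨n, y, σ.trans τ, g, h', ?_, rfl⟩
    have hx : (y ∘ ⇑τ) ∘ ⇑σ = y ∘ ⇑(σ.trans τ) := by funext i; simp
    rw [hx]

lemma sRel_of_quot_eq {A : ℕ → Type} {act : ∀ n : ℕ, Equiv.Perm (Fin n) → A n → A n}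
    {X : Type} {a b : AnElem A X}
    (h : Quot.mk (AnRel A act X) a = Quot.mk (AnRel A act X) b) : SRel A X a b := by
  refine ((sRel_equiv A X).eqvGen_iff).mp ?_
  refine Relation.EqvGen.mono (r := AnRel A act X) ?_ a b (Quot.eqvGen_exact h)
  rintro a b ⟨n, x, σ, g, rfl, rfl⟩
  exact ⟨n, x, σ, g, _, rfl, rfl⟩

lemma map_perm_trans (F : Type ⥤ Type) {n : ℕ} (σ τ : Equiv.Perm (Fin n))
    (g : F.obj (Fin n)) : F.map (TypeCat.ofHom ⇑τ) (F.map (TypeCat.ofHom ⇑σ) g) = F.map (TypeCat.ofHom ⇑(σ.trans τ)) g := by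
  rw [← FunctorToTypes.map_comp_apply]
  rfl

lemma map_perm_one (F : Type ⥤ Type) {n : ℕ} (g : F.obj (Fin n)) :
    F.map (TypeCat.ofHom ⇑(1 : Equiv.Perm (Fin n))) g = g := by
  have h : TypeCat.ofHom (⇑(1 : Equiv.Perm (Fin n))) = 𝟙 (Fin n) := rfl
  rw [h, FunctorToTypes.map_id_apply]

lemma map_perm_inv (F : Type ⥤ Type) {n : ℕ} (σ : Equiv.Perm (Fin n))
    (g : F.obj (Fin n)) : F.map (TypeCat.ofHom ⇑σ⁻¹) (F.map (TypeCat.ofHom ⇑σ) g) = g := by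
  rw [map_perm_trans]
  have h : σ.trans σ⁻¹ = 1 := by ext i; simp
  rw [h, map_perm_one]

lemma anRelF_equiv (F : Type ⥤ Type) (X : Type) :
    Equivalence (AnRel (fun n => F.obj (Fin n)) (fun _ σ t => F.map (TypeCat.ofHom ⇑σ) t) X) := by
  constructor
  · rintro ⟨n, x, g⟩
    refine ⟨n, x, 1, g, rfl, ?_⟩
    show (⟨n, (x, g)⟩ : AnElem (fun n => F.obj (Fin n)) X) = ⟨n, (x, F.map (TypeCat.ofHom ⇑(1 : Equiv.Perm (Fin n))) g)⟩
    rw [map_perm_one]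
  · rintro a b ⟨n, x, σ, g, rfl, rfl⟩
    refine ⟨n, x ∘ ⇑σ, σ⁻¹, F.map (TypeCat.ofHom ⇑σ) g, ?_, ?_⟩
    · show (⟨n, (x, F.map (TypeCat.ofHom ⇑σ) g)⟩ : AnElem (fun n => F.obj (Fin n)) X) = ⟨n, ((x ∘ ⇑σ) ∘ ⇑σ⁻¹, F.map (TypeCat.ofHom ⇑σ) g)⟩
      have hx : (x ∘ ⇑σ) ∘ ⇑σ⁻¹ = x := by funext i; simp
      rw [hx]
    · show (⟨n, (x ∘ ⇑σ, g)⟩ : AnElem (fun n => F.obj (Fin n)) X) = ⟨n, (x ∘ ⇑σ, F.map (TypeCat.ofHom ⇑σ⁻¹) (F.map (TypeCat.ofHom ⇑σ) g))⟩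
      rw [map_perm_inv]
  · rintro a b c ⟨n, x, σ, g, rfl, h1⟩ ⟨m, y, τ, h, h2, rfl⟩
    rw [h1] at h2
    obtain ⟨rfl, h3⟩ := Sigma.mk.inj_iff.mp h2
    obtain ⟨h4, h5⟩ := Prod.mk_inj.mp (eq_of_heq h3)
    subst h4
    refine ⟨n, y, σ.trans τ, g, ?_, ?_⟩
    · show (⟨n, ((y ∘ ⇑τ) ∘ ⇑σ, g)⟩ : AnElem (fun n => F.obj (Fin n)) X) = ⟨n, (y ∘ ⇑(σ.trans τ), g)⟩
      have hx : (y ∘ ⇑τ) ∘ ⇑σ = y ∘ ⇑(σ.trans τ) := by funext i; simp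
      rw [hx]
    · show (⟨n, (y, F.map (TypeCat.ofHom ⇑τ) h)⟩ : AnElem (fun n => F.obj (Fin n)) X) = ⟨n, (y, F.map (TypeCat.ofHom ⇑(σ.trans τ)) g)⟩
      have h5' : F.map (TypeCat.ofHom ⇑σ) g = h := h5
      rw [← h5', map_perm_trans]

lemma anRelF_of_quot_eq {F : Type ⥤ Type} {X : Type}
    {a b : AnElem (fun n => F.obj (Fin n)) X}
    (h : Quot.mk (AnRel (fun n => F.obj (Fin n)) (fun _ σ t => F.map (TypeCat.ofHom ⇑σ) t) X) a
       = Quot.mk (AnRel (fun n => F.obj (Fin n)) (fun _ σ t => F.map (TypeCat.ofHom ⇑σ) t) X) b) :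
    AnRel (fun n => F.obj (Fin n)) (fun _ σ t => F.map (TypeCat.ofHom ⇑σ) t) X a b :=
  ((anRelF_equiv F X).eqvGen_iff).mp (Quot.eqvGen_exact h)

end AnAux

namespace AnAux2

open AnAux

variable {F G : Type ⥤ Type} {A : ℕ → Type} {act : ∀ n : ℕ, Equiv.Perm (Fin n) → A n → A n}

/-- The generic element of arity `n` attached to `g : A n`. -/
def gen (α : G ≅ anRealize A act) (n : ℕ) (g : A n) : G.obj (Fin n) :=
  α.inv.app (Fin n) (Quot.mk (AnRel A act (Fin n)) ⟨n, id, g⟩)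

lemma mk_eq_map (X : Type) (n : ℕ) (x : Fin n → X) (g : A n) :
    Quot.mk (AnRel A act X) ⟨n, x, g⟩
      = (anRealize A act).map (TypeCat.ofHom x) (Quot.mk (AnRel A act (Fin n)) ⟨n, id, g⟩) := by
  show Quot.mk (AnRel A act X) ⟨n, x, g⟩ = Quot.mk (AnRel A act X) ⟨n, x ∘ id, g⟩
  rw [Function.comp_id]

lemma gen_spec (α : G ≅ anRealize A act) (X : Type) (n : ℕ) (x : Fin n → X) (g : A n) :
    α.inv.app X (Quot.mk (AnRel A act X) ⟨n, x, g⟩) = G.map (TypeCat.ofHom x) (gen α n g) := by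
  rw [mk_eq_map]
  exact FunctorToTypes.naturality α.inv (TypeCat.ofHom x) _

/-- The value at the generic element. -/
def tOf (α : G ≅ anRealize A act) (θ : G ⟶ F) {n : ℕ} (g : A n) : F.obj (Fin n) :=
  θ.app (Fin n) (gen α n g)

lemma gen_act (α : G ≅ anRealize A act) {n : ℕ} (σ : Equiv.Perm (Fin n)) (g : A n) :
    gen α n (act n σ g) = G.map (TypeCat.ofHom ⇑σ) (gen α n g) := by
  unfold gen
  have h1 : Quot.mk (AnRel A act (Fin n)) ⟨n, id, act n σ g⟩
      = Quot.mk (AnRel A act (Fin n)) ⟨n, ⇑σ, g⟩ := by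
    refine (Quot.sound ⟨n, id, σ, g, ?_, rfl⟩).symm
    rw [Function.id_comp]
  rw [h1, ← gen, gen_spec]

lemma tOf_act (α : G ≅ anRealize A act) (θ : G ⟶ F) {n : ℕ} (σ : Equiv.Perm (Fin n))
    (g : A n) : tOf α θ (act n σ g) = F.map (TypeCat.ofHom ⇑σ) (tOf α θ g) := by
  unfold tOf
  rw [gen_act]
  exact FunctorToTypes.naturality θ (TypeCat.ofHom ⇑σ) (gen α n g)

/-- The comparison map on realizations. -/
def psiApp (α : G ≅ anRealize A act) (θ : G ⟶ F) (X : Type) :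
    (anRealize A act).obj X → (analyticPart F).obj X :=
  Quot.lift (fun e => Quot.mk _ ⟨e.1, e.2.1, tOf α θ e.2.2⟩) (by
    rintro a b ⟨n, x, σ, g, rfl, rfl⟩
    show Quot.mk _ (⟨n, x ∘ ⇑σ, tOf α θ g⟩ : AnElem (fun n => F.obj (Fin n)) X)
        = Quot.mk _ ⟨n, x, tOf α θ (act n σ g)⟩
    rw [tOf_act]
    exact Quot.sound ⟨n, x, σ, tOf α θ g, rfl, rfl⟩)

def psi (α : G ≅ anRealize A act) (θ : G ⟶ F) : anRealize A act ⟶ analyticPart F where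
  app X := TypeCat.ofHom (psiApp α θ X)
  naturality X Y f := by
    ext q
    induction q using Quot.ind
    rfl

/-- The factorization `θ'' : G ⟶ Fᵃ`. -/
def thetaA (α : G ≅ anRealize A act) (θ : G ⟶ F) : G ⟶ analyticPart F :=
  α.hom ≫ psi α θ

lemma psi_counit (α : G ≅ anRealize A act) (θ : G ⟶ F) (X : Type)
    (q : (anRealize A act).obj X) :
    anCounitApp F X (psiApp α θ X q) = θ.app X (α.inv.app X q) := by
  induction q using Quot.ind with
  | _ e =>
    obtain ⟨n, x, g⟩ := e
    show F.map (TypeCat.ofHom x) (tOf α θ g) = θ.app X (α.inv.app X (Quot.mk _ ⟨n, x, g⟩))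
    rw [gen_spec]
    exact (FunctorToTypes.naturality θ (TypeCat.ofHom x) (gen α n g)).symm

lemma thetaA_counit (α : G ≅ anRealize A act) (θ : G ⟶ F) :
    thetaA α θ ≫ anCounit F = θ := by
  apply NatTrans.ext
  funext X
  ext g
  show anCounitApp F X (psiApp α θ X (α.hom.app X g)) = θ.app X g
  rw [psi_counit, FunctorToTypes.hom_inv_id_app_apply]

end AnAux2

namespace AnAux2

open AnAux

variable {F G : Type ⥤ Type} {A : ℕ → Type} {act : ∀ n : ℕ, Equiv.Perm (Fin n) → A n → A n}

lemma thetaA_wc (α : G ≅ anRealize A act) (θ : G ⟶ F) : WeaklyCartesian (thetaA α θ) := by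
  intro X Y f a b h
  revert h
  induction b using Quot.ind with
  | _ eb =>
  obtain ⟨m, x, t⟩ := eb
  intro h
  obtain ⟨ea, hea⟩ := Quot.exists_rep (α.hom.app Y a)
  obtain ⟨n, y, g⟩ := ea
  have h' : Quot.mk (AnRel (fun k => F.obj (Fin k)) (fun _ σ s => F.map (TypeCat.ofHom ⇑σ) s) Y)
        ⟨m, f ∘ x, t⟩
      = Quot.mk _ ⟨n, y, tOf α θ g⟩ := by
    refine h.trans ?_
    show psiApp α θ Y (α.hom.app Y a) = _
    rw [← hea]
    rfl
  obtain ⟨k, z, σ, s, e1, e2⟩ := anRelF_of_quot_eq h'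
  have hkm : k = m := (Sigma.mk.inj_iff.mp e1).1.symm
  subst hkm
  have hnm : n = k := (Sigma.mk.inj_iff.mp e2).1
  subst hnm
  have e1p := Prod.mk_inj.mp (eq_of_heq (Sigma.mk.inj_iff.mp e1).2)
  have e2p := Prod.mk_inj.mp (eq_of_heq (Sigma.mk.inj_iff.mp e2).2)
  obtain ⟨hfx, hts⟩ := e1p
  obtain ⟨hyz, htg⟩ := e2p
  subst hts
  subst hyz
  -- hfx : f ∘ x = y ∘ ⇑σ ;  htg : tOf α θ g = F.map ⇑σ t  (up to beta)
  refine ⟨α.inv.app X (Quot.mk _ ⟨_, x ∘ ⇑σ⁻¹, g⟩), ?_, ?_⟩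
  · have hy2 : (TypeCat.ofHom (x ∘ ⇑σ⁻¹) ≫ TypeCat.ofHom f : Fin _ ⟶ Y) = TypeCat.ofHom y := by
      ext i
      show f (x (σ⁻¹ i)) = y i
      have hc := congrFun hfx (σ⁻¹ i)
      simp only [Function.comp_apply] at hc
      rw [hc]; exact congrArg y (Equiv.apply_symm_apply σ i)
    calc G.map (TypeCat.ofHom f) (α.inv.app X (Quot.mk _ ⟨_, x ∘ ⇑σ⁻¹, g⟩))
        = G.map (TypeCat.ofHom f) (G.map (TypeCat.ofHom (x ∘ ⇑σ⁻¹)) (gen α _ g)) := by rw [gen_spec]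
      _ = G.map (TypeCat.ofHom (x ∘ ⇑σ⁻¹) ≫ TypeCat.ofHom f) (gen α _ g) :=
          (FunctorToTypes.map_comp_apply G _ _ _).symm
      _ = G.map (TypeCat.ofHom y) (gen α _ g) := by rw [hy2]
      _ = α.inv.app Y (Quot.mk _ ⟨_, y, g⟩) := (gen_spec α Y _ y g).symm
      _ = α.inv.app Y (α.hom.app Y a) := by rw [hea]
      _ = a := FunctorToTypes.hom_inv_id_app_apply α Y a
  · show psiApp α θ X (α.hom.app X (α.inv.app X _)) = _
    refine (congrArg (psiApp α θ X) (Iso.inv_hom_id_app_apply α X _)).trans ?_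
    show Quot.mk _ (⟨_, x ∘ ⇑σ⁻¹, tOf α θ g⟩ : AnElem (fun k => F.obj (Fin k)) X)
        = Quot.mk _ ⟨_, x, t⟩
    rw [htg]
    refine (Quot.sound ⟨_, x ∘ ⇑σ⁻¹, σ, t, ?_, rfl⟩).symm
    have hx : (x ∘ ⇑σ⁻¹) ∘ ⇑σ = x := by funext i; simp
    rw [hx]

lemma wc_gen (α : G ≅ anRealize A act) (θ₁ : G ⟶ analyticPart F)
    (wc : WeaklyCartesian θ₁) {n : ℕ} (g : A n) :
    θ₁.app (Fin n) (gen α n g)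
      = Quot.mk _ ⟨n, id, anCounitApp F (Fin n) (θ₁.app (Fin n) (gen α n g))⟩ := by
  obtain ⟨eu, hu⟩ := Quot.exists_rep (θ₁.app (Fin n) (gen α n g))
  obtain ⟨m, y, t⟩ := eu
  obtain ⟨a', h1, h2⟩ := wc (Fin m) (Fin n) y (gen α n g)
    (Quot.mk (AnRel (fun k => F.obj (Fin k)) (fun _ σ u => F.map (TypeCat.ofHom ⇑σ) u) (Fin m))
      ⟨m, id, t⟩) (by
    rw [← hu]
    show Quot.mk _ (⟨m, y ∘ id, t⟩ : AnElem (fun k => F.obj (Fin k)) (Fin n)) = _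
    rw [Function.comp_id]; rfl)
  obtain ⟨ea, ha'⟩ := Quot.exists_rep (α.hom.app (Fin m) a')
  obtain ⟨k, z, c⟩ := ea
  have hq : Quot.mk (AnRel A act (Fin n)) ⟨k, y ∘ z, c⟩ = Quot.mk _ ⟨n, id, g⟩ := by
    have hga : α.hom.app (Fin n) (G.map (TypeCat.ofHom y) a') = Quot.mk _ ⟨k, y ∘ z, c⟩ := by
      rw [FunctorToTypes.naturality α.hom (TypeCat.ofHom y) a', ← ha']
      rfl
    rw [← hga, h1]
    exact FunctorToTypes.inv_hom_id_app_apply α (Fin n) _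
  obtain ⟨p, w, ρ, c1, c1', e1, e2⟩ := sRel_of_quot_eq hq
  have hpn : n = p := (Sigma.mk.inj_iff.mp e2).1
  subst hpn
  have hkn : n = k := (Sigma.mk.inj_iff.mp e1).1.symm
  subst hkn
  have hw : (id : Fin n → Fin n) = w :=
    (Prod.mk_inj.mp (eq_of_heq (Sigma.mk.inj_iff.mp e2).2)).1
  have hyz : y ∘ z = ⇑ρ := by
    have h5 := (Prod.mk_inj.mp (eq_of_heq (Sigma.mk.inj_iff.mp e1).2)).1
    rw [h5, ← hw, Function.id_comp]
  have hzinj : Function.Injective z := by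
    have hcmp : Function.Injective (y ∘ z) := by rw [hyz]; exact ρ.injective
    exact Function.Injective.of_comp hcmp
  have ha2 : a' = G.map (TypeCat.ofHom z) (gen α n c) := by
    rw [← gen_spec, ha', FunctorToTypes.hom_inv_id_app_apply]
  obtain ⟨ec, hc2⟩ := Quot.exists_rep (θ₁.app (Fin n) (gen α n c))
  obtain ⟨p2, w2, s⟩ := ec
  have h3 : Quot.mk (AnRel (fun k => F.obj (Fin k)) (fun _ σ u => F.map (TypeCat.ofHom ⇑σ) u) (Fin m))
        ⟨p2, z ∘ w2, s⟩ = Quot.mk _ ⟨m, id, t⟩ := by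
    rw [← h2, ha2, FunctorToTypes.naturality θ₁ (TypeCat.ofHom z) (gen α n c), ← hc2]
    rfl
  obtain ⟨k2, v, σ', s', f1, f2⟩ := anRelF_of_quot_eq h3
  have hk2 : m = k2 := (Sigma.mk.inj_iff.mp f2).1
  subst hk2
  have hp2 : m = p2 := (Sigma.mk.inj_iff.mp f1).1.symm
  subst hp2
  have hv : (id : Fin m → Fin m) = v :=
    (Prod.mk_inj.mp (eq_of_heq (Sigma.mk.inj_iff.mp f2).2)).1
  have hzw : z ∘ w2 = ⇑σ' := by
    have h6 := (Prod.mk_inj.mp (eq_of_heq (Sigma.mk.inj_iff.mp f1).2)).1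
    rw [h6, ← hv, Function.id_comp]
  have hzsurj : Function.Surjective z := by
    have hcmp : Function.Surjective (z ∘ w2) := by rw [hzw]; exact σ'.surjective
    exact Function.Surjective.of_comp hcmp
  have hmn : m = n := by
    have h4 : n ≤ m := by
      have := Fintype.card_le_of_injective z hzinj
      simpa using this
    have h5 : m ≤ n := by
      have := Fintype.card_le_of_surjective z hzsurj
      simpa using this
    omega
  have hmn' : n = m := hmn.symm
  subst hmn'
  set ζ : Equiv.Perm (Fin n) := Equiv.ofBijective z ⟨hzinj, hzsurj⟩ with hζ
  have hyπ : y = ⇑(ζ.symm.trans ρ) := by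
    funext i
    have hzi : z (ζ.symm i) = i := by
      show ζ (ζ.symm i) = i
      simp
    calc y i = y (z (ζ.symm i)) := by rw [hzi]
      _ = (y ∘ z) (ζ.symm i) := rfl
      _ = ρ (ζ.symm i) := by rw [hyz]
      _ = (ζ.symm.trans ρ) i := rfl
  have hu2 : θ₁.app (Fin n) (gen α n g)
      = Quot.mk _ ⟨n, id, F.map (TypeCat.ofHom ⇑(ζ.symm.trans ρ)) t⟩ := by
    rw [← hu, hyπ]
    refine Quot.sound ⟨n, id, ζ.symm.trans ρ, t, ?_, rfl⟩
    rw [Function.id_comp]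
  rw [hu2]
  have hε : anCounitApp F (Fin n)
      (Quot.mk _ ⟨n, id, F.map (TypeCat.ofHom ⇑(ζ.symm.trans ρ)) t⟩) = F.map (TypeCat.ofHom ⇑(ζ.symm.trans ρ)) t := by
    show F.map (𝟙 (Fin n)) (F.map (TypeCat.ofHom ⇑(ζ.symm.trans ρ)) t) = _
    rw [FunctorToTypes.map_id_apply]
  rw [hε]

lemma wc_unique (α : G ≅ anRealize A act) (θ₁ θ₂ : G ⟶ analyticPart F)
    (w1 : WeaklyCartesian θ₁) (w2 : WeaklyCartesian θ₂)
    (h : θ₁ ≫ anCounit F = θ₂ ≫ anCounit F) : θ₁ = θ₂ := by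
  apply NatTrans.ext
  funext X
  ext g
  show θ₁.app X g = θ₂.app X g
  obtain ⟨eg, hg⟩ := Quot.exists_rep (α.hom.app X g)
  obtain ⟨n, x, gA⟩ := eg
  have hdec : g = G.map (TypeCat.ofHom x) (gen α n gA) := by
    rw [← gen_spec, hg, FunctorToTypes.hom_inv_id_app_apply]
  rw [hdec, FunctorToTypes.naturality θ₁ (TypeCat.ofHom x) (gen α n gA),
      FunctorToTypes.naturality θ₂ (TypeCat.ofHom x) (gen α n gA),
      wc_gen α θ₁ w1 gA, wc_gen α θ₂ w2 gA]
  have hc : anCounitApp F (Fin n) (θ₁.app (Fin n) (gen α n gA))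
      = anCounitApp F (Fin n) (θ₂.app (Fin n) (gen α n gA)) := by
    have := congrArg (fun (τ : G ⟶ F) => τ.app (Fin n) (gen α n gA)) h
    exact this
  rw [hc]

end AnAux2


/-- the inclusion of analytic endofunctors of `Set` into finitary
endofunctors has a right adjoint `(-)ᵃ`, with `Fᵃ(X) = ∑ₙ Xⁿ ⊗_{Sₙ} F((n])`, whose
counit sends the class of `(x⃗, t)` to `F(x⃗)(t)`: every natural transformation from
an analytic functor `G` to `F` factors uniquely through the counit via a weakly
cartesian natural transformation `G ⟶ Fᵃ`. -/
theorem analytic_part_right_adjoint (F : Type ⥤ Type)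
    [Limits.PreservesFilteredColimits F] :
    IsAnalyticFunctor (analyticPart F) ∧
    (∀ (X : Type) (n : ℕ) (x : Fin n → X) (t : F.obj (Fin n)),
      (anCounit F).app X (Quot.mk (AnRel (fun n => F.obj (Fin n))
        (fun _ σ t => F.map (TypeCat.ofHom ⇑σ) t) X) ⟨n, x, t⟩) = F.map (TypeCat.ofHom x) t) ∧
    (∀ (G : Type ⥤ Type), IsAnalyticFunctor G → ∀ θ : G ⟶ F,
      ∃! θ' : {t : G ⟶ analyticPart F // WeaklyCartesian t},
        θ'.1 ≫ anCounit F = θ) := by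
  refine ⟨⟨fun n => F.obj (Fin n), fun _ σ t => F.map (TypeCat.ofHom ⇑σ) t, ⟨Iso.refl _⟩⟩,
    fun X n x t => rfl, ?_⟩
  rintro G ⟨A, act, ⟨α⟩⟩ θ
  refine ⟨⟨AnAux2.thetaA α θ, AnAux2.thetaA_wc α θ⟩, AnAux2.thetaA_counit α θ, ?_⟩
  rintro ⟨θ₁, w1⟩ h1
  refine Subtype.ext ?_
  exact AnAux2.wc_unique α θ₁ (AnAux2.thetaA α θ) w1 (AnAux2.thetaA_wc α θ)
    (by rw [h1, AnAux2.thetaA_counit])
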